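/- Let N ≥ 2 be even. There exists a tuple of tensors (T_v)_v ∈ (ℂ² ⊗ (ℂ²)^{⊗4})^{2N} such that the torus contraction ψ((T_v)_v) ∈ (ℂ²)^{⊗2N} equals Σ_{i : {1,…,N} → {1,2}} e_{i(1)} ⊗ e_{i(1)} ⊗ e_{i(2)} ⊗ e_{i(2)} ⊗ ⋯ ⊗ e_{i(N)} ⊗ e_{i(N)} (physical factors ordered column by column, top vertex then bottom vertex), and this tensor has border rank exactly 2^N; in particular, a tensor of border rank 2^N arises as a 2×N torus tensor network contraction with bond dimension 2 and physical dimension 2. -/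

import Mathlib

open scoped BigOperators

/-- The contraction map `ψ` of the `2 × N` grid on the torus.  Vertices are pairs
`(r, c) : Fin 2 × Fin N` (`r` the row, `c` the column); each vertex `v` carries a tensor
`T v ∈ ℂ² ⊗ (ℂ²)^{⊗4}` given in coordinates as `T v b u x d l` where `b` is the physical index
and `u, x, d, l` are the indices of the upper, right, lower and left edges at `v`.
For each column `c` there are two vertical entanglement edges joining `(0,c)` and `(1,c)`:
edge `U c` is the upper edge of `(0,c)` and the lower edge of `(1,c)`, and edge `D c` is the
lower edge of `(0,c)` and the upper edge of `(1,c)`.  For each vertex `(r,c)` the horizontal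
entanglement edge `H (r,c)` is the right edge of `(r,c)` and the left edge of `(r, c+1 mod N)`.
The coordinate of `psi N hN T` at a physical multi-index `b` is the sum over all assignments of
an index in `{1,2}` to every entanglement edge of the product over the vertices of the
corresponding coordinates of the `T v`. -/
noncomputable def psi (N : ℕ) (hN : 2 ≤ N)
    (T : Fin 2 × Fin N → (Fin 2 → Fin 2 → Fin 2 → Fin 2 → Fin 2 → ℂ)) :
    (Fin 2 × Fin N → Fin 2) → ℂ := fun b =>
  ∑ U : Fin N → Fin 2, ∑ D : Fin N → Fin 2, ∑ H : Fin 2 × Fin N → Fin 2,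
    ∏ v : Fin 2 × Fin N,
      T v (b v) (if v.1 = 0 then U v.2 else D v.2) (H v)
        (if v.1 = 0 then D v.2 else U v.2) (H (v.1, v.2 - ⟨1, by omega⟩))

/-- The torus contraction `φ(T)` obtained by placing the single tensor `T ∈ ℂ² ⊗ (ℂ²)^{⊗4}` at
every vertex of the `2 × N` grid on the torus. -/
noncomputable def phi (N : ℕ) (hN : 2 ≤ N)
    (T : Fin 2 → Fin 2 → Fin 2 → Fin 2 → Fin 2 → ℂ) : (Fin 2 × Fin N → Fin 2) → ℂ :=
  psi N hN (fun _ => T)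

/-- The `S`-flattening of a tensor `t ∈ (ℂ²)^{⊗2N}` (tensor factors indexed by the vertices of
the `2 × N` torus grid, `t` written in coordinates in the standard basis), as a matrix whose
columns are indexed by the multi-indices of the factors in `S` and whose rows are indexed by the
multi-indices of the remaining factors; thus `(flat N S t).mulVecLin` is exactly the flattening
map `(⊗_{v∈S} ℂ²)^* → ⊗_{v∉S} ℂ²` in coordinates, and its rank is `(flat N S t).rank`. -/
noncomputable def flat (N : ℕ) (S : Finset (Fin 2 × Fin N))
    (t : (Fin 2 × Fin N → Fin 2) → ℂ) :
    Matrix ({v : Fin 2 × Fin N // v ∉ S} → Fin 2) ({v : Fin 2 × Fin N // v ∈ S} → Fin 2) ℂ :=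
  Matrix.of fun b a => t fun v => if h : v ∈ S then a ⟨v, h⟩ else b ⟨v, h⟩

/-- `cpRankLE t r` says the tensor `t ∈ (ℂ²)^{⊗2N}` (factors indexed by the torus grid
vertices, coordinates in the standard basis) is a sum of `r` rank-one (pure) tensors. -/
def cpRankLE {N : ℕ} (t : (Fin 2 × Fin N → Fin 2) → ℂ) (r : ℕ) : Prop :=
  ∃ w : Fin r → (Fin 2 × Fin N) → Fin 2 → ℂ,
    t = fun x => ∑ j : Fin r, ∏ v : Fin 2 × Fin N, w j v (x v)

/-- The tensor `Σ_{i : Fin N → Fin 2} e_{i(1)} ⊗ e_{i(1)} ⊗ e_{i(2)} ⊗ e_{i(2)} ⊗ ⋯ ⊗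
e_{i(N)} ⊗ e_{i(N)} ∈ (ℂ²)^{⊗2N}`, physical factors ordered column by column (at vertex
`(r, c)` of the torus grid, both the top and the bottom factor of column `c` carry `e_{i(c)}`),
written in coordinates in the standard basis. -/
noncomputable def T9 (N : ℕ) : (Fin 2 × Fin N → Fin 2) → ℂ := fun b =>
  ∑ i : Fin N → Fin 2, ∏ v : Fin 2 × Fin N, if b v = i v.2 then (1 : ℂ) else 0

noncomputable def T0 : Fin 2 → Fin 2 → Fin 2 → Fin 2 → Fin 2 → ℂ :=
  fun b u x d l => ((if u = b then (1:ℂ) else 0) * (if d = b then 1 else 0))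
    * ((if x = 0 then 1 else 0) * (if l = 0 then 1 else 0))

lemma ite01_mul_self (P : Prop) [Decidable P] :
    (if P then (1:ℂ) else 0) * (if P then 1 else 0) = if P then 1 else 0 := by
  split <;> simp

lemma sum2 (x y : Fin 2) :
    (∑ j : Fin 2, (if x = j then (1:ℂ) else 0) * (if y = j then 1 else 0))
      = if x = y then 1 else 0 := by
  fin_cases x <;> fin_cases y <;> simp [Fin.sum_univ_two]

lemma sum4 (x y : Fin 2) :
    (∑ u : Fin 2, ∑ d : Fin 2, ((if u = x then (1:ℂ) else 0) * (if d = x then 1 else 0))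
      * ((if d = y then 1 else 0) * (if u = y then 1 else 0))) = if x = y then 1 else 0 := by
  fin_cases x <;> fin_cases y <;> simp [Fin.sum_univ_two]

lemma T9_eq (N : ℕ) (b : Fin 2 × Fin N → Fin 2) :
    T9 N b = ∏ c : Fin N, if b (0, c) = b (1, c) then (1:ℂ) else 0 := by
  unfold T9
  have h1 : ∀ i : Fin N → Fin 2,
      (∏ v : Fin 2 × Fin N, if b v = i v.2 then (1:ℂ) else 0)
        = ∏ c : Fin N, ((if b (0,c) = i c then (1:ℂ) else 0) * (if b (1,c) = i c then 1 else 0)) := by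
    intro i
    rw [Fintype.prod_prod_type, Finset.prod_comm]
    simp [Fin.prod_univ_two]
  simp_rw [h1]
  rw [← Fintype.prod_sum (fun c j => (if b (0,c) = j then (1:ℂ) else 0) * (if b (1,c) = j then 1 else 0))]
  exact Finset.prod_congr rfl fun c _ => sum2 _ _

lemma psi_T0 (N : ℕ) (hN : 2 ≤ N) (b : Fin 2 × Fin N → Fin 2) :
    psi N hN (fun _ => T0) b = ∏ c : Fin N, if b (0, c) = b (1, c) then (1:ℂ) else 0 := by
  haveI : NeZero N := ⟨by omega⟩
  unfold psi T0
  have hH : ∀ H : Fin 2 × Fin N → Fin 2,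
      (∏ v : Fin 2 × Fin N, ((if H v = 0 then (1:ℂ) else 0) *
        (if H (v.1, v.2 - ⟨1, by omega⟩) = 0 then 1 else 0)))
        = ∏ v : Fin 2 × Fin N, (if H v = 0 then (1:ℂ) else 0) := by
    intro H
    rw [Finset.prod_mul_distrib]
    have := Equiv.prod_comp ((Equiv.refl (Fin 2)).prodCongr (Equiv.subRight (⟨1, by omega⟩ : Fin N)))
      (fun v : Fin 2 × Fin N => if H v = 0 then (1:ℂ) else 0)
    simp only [Equiv.prodCongr_apply, Equiv.coe_refl, Equiv.subRight_apply, Prod.map] at this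
    rw [show (∏ v : Fin 2 × Fin N, if H (v.1, v.2 - ⟨1, by omega⟩) = 0 then (1:ℂ) else 0)
        = ∏ v : Fin 2 × Fin N, if H v = 0 then (1:ℂ) else 0 from this]
    rw [← Finset.prod_mul_distrib]
    exact Finset.prod_congr rfl fun v _ => ite01_mul_self _
  have hHsum : (∑ H : Fin 2 × Fin N → Fin 2,
      ∏ v : Fin 2 × Fin N, (if H v = 0 then (1:ℂ) else 0)) = 1 := by
    rw [← Fintype.prod_sum (fun (v : Fin 2 × Fin N) (j : Fin 2) => if j = 0 then (1:ℂ) else 0)]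
    simp [Fin.sum_univ_two]
  have key : ∀ U D : Fin N → Fin 2,
      (∑ H : Fin 2 × Fin N → Fin 2,
        ∏ v : Fin 2 × Fin N,
          (((if (if v.1 = 0 then U v.2 else D v.2) = b v then (1:ℂ) else 0) *
            (if (if v.1 = 0 then D v.2 else U v.2) = b v then 1 else 0))
          * ((if H v = 0 then 1 else 0) * (if H (v.1, v.2 - ⟨1, by omega⟩) = 0 then 1 else 0))))
      = ∏ c : Fin N,
          (((if U c = b (0,c) then (1:ℂ) else 0) * (if D c = b (0,c) then 1 else 0)) *
           ((if D c = b (1,c) then (1:ℂ) else 0) * (if U c = b (1,c) then 1 else 0))) := by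
    intro U D
    calc _ = ∑ H : Fin 2 × Fin N → Fin 2,
          (∏ v : Fin 2 × Fin N,
            ((if (if v.1 = 0 then U v.2 else D v.2) = b v then (1:ℂ) else 0) *
              (if (if v.1 = 0 then D v.2 else U v.2) = b v then 1 else 0)))
          * ∏ v : Fin 2 × Fin N,
            ((if H v = 0 then (1:ℂ) else 0) * (if H (v.1, v.2 - ⟨1, by omega⟩) = 0 then 1 else 0)) :=
        Finset.sum_congr rfl fun H _ => Finset.prod_mul_distrib
      _ = (∏ v : Fin 2 × Fin N,
            ((if (if v.1 = 0 then U v.2 else D v.2) = b v then (1:ℂ) else 0) *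
              (if (if v.1 = 0 then D v.2 else U v.2) = b v then 1 else 0))) := by
          rw [← Finset.mul_sum, Finset.sum_congr rfl fun H _ => hH H, hHsum, mul_one]
      _ = _ := by
          rw [Fintype.prod_prod_type, Finset.prod_comm]
          simp [Fin.prod_univ_two]
  rw [Finset.sum_congr rfl fun U _ => Finset.sum_congr rfl fun D _ => key U D]
  calc (∑ U : Fin N → Fin 2, ∑ D : Fin N → Fin 2, ∏ c : Fin N,
          (((if U c = b (0,c) then (1:ℂ) else 0) * (if D c = b (0,c) then 1 else 0)) *
           ((if D c = b (1,c) then (1:ℂ) else 0) * (if U c = b (1,c) then 1 else 0))))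
      = ∑ U : Fin N → Fin 2, ∏ c : Fin N, ∑ d : Fin 2,
          (((if U c = b (0,c) then (1:ℂ) else 0) * (if d = b (0,c) then 1 else 0)) *
           ((if d = b (1,c) then (1:ℂ) else 0) * (if U c = b (1,c) then 1 else 0))) :=
        Finset.sum_congr rfl fun U _ => (Fintype.prod_sum (fun (c : Fin N) (d : Fin 2) =>
          (((if U c = b (0,c) then (1:ℂ) else 0) * (if d = b (0,c) then 1 else 0)) *
           ((if d = b (1,c) then (1:ℂ) else 0) * (if U c = b (1,c) then 1 else 0))))).symm
    _ = ∏ c : Fin N, ∑ u : Fin 2, ∑ d : Fin 2,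
          (((if u = b (0,c) then (1:ℂ) else 0) * (if d = b (0,c) then 1 else 0)) *
           ((if d = b (1,c) then (1:ℂ) else 0) * (if u = b (1,c) then 1 else 0))) :=
        (Fintype.prod_sum (fun (c : Fin N) (u : Fin 2) => ∑ d : Fin 2,
          (((if u = b (0,c) then (1:ℂ) else 0) * (if d = b (0,c) then 1 else 0)) *
           ((if d = b (1,c) then (1:ℂ) else 0) * (if u = b (1,c) then 1 else 0))))).symm
    _ = ∏ c : Fin N, if b (0, c) = b (1, c) then (1:ℂ) else 0 :=
        Finset.prod_congr rfl fun c _ => sum4 _ _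

lemma T9_cpRank (N : ℕ) : cpRankLE (T9 N) (2 ^ N) := by
  have hcard : Fintype.card (Fin N → Fin 2) = 2 ^ N := by simp
  let e : Fin (2 ^ N) ≃ (Fin N → Fin 2) := (Fintype.equivFinOfCardEq hcard).symm
  refine ⟨fun j v k => if k = e j v.2 then 1 else 0, ?_⟩
  funext x
  rw [T9, ← Equiv.sum_comp e (fun i => ∏ v : Fin 2 × Fin N, if x v = i v.2 then (1:ℂ) else 0)]

noncomputable def Mmat (N : ℕ) (t : (Fin 2 × Fin N → Fin 2) → ℂ) :
    Matrix ({v : Fin 2 × Fin N // v.1 ≠ 0} → Fin 2) ({v : Fin 2 × Fin N // v.1 ≠ 0} → Fin 2) ℂ :=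
  Matrix.of fun b b' =>
    t fun v => if h : v.1 ≠ 0 then b ⟨v, h⟩ else b' ⟨(1, v.2), by simp⟩

noncomputable def Mdet (N : ℕ) (t : (Fin 2 × Fin N → Fin 2) → ℂ) : ℂ := (Mmat N t).det

lemma Mdet_continuous (N : ℕ) : Continuous (Mdet N) := by
  apply Continuous.matrix_det
  exact continuous_pi fun b => continuous_pi fun b' => continuous_apply _

lemma card_sub (N : ℕ) : Fintype.card {v : Fin 2 × Fin N // v.1 ≠ 0} = N := by
  let e : Fin N ≃ {v : Fin 2 × Fin N // v.1 ≠ 0} :=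
    { toFun := fun c => ⟨(1, c), by simp⟩
      invFun := fun v => v.1.2
      left_inv := fun c => rfl
      right_inv := by
        rintro ⟨⟨r, c⟩, h⟩
        fin_cases r
        · simp at h
        · rfl }
  rw [← Fintype.card_congr e, Fintype.card_fin]

lemma Mdet_zero (N : ℕ) (r : ℕ) (hr : r < 2 ^ N) (t : (Fin 2 × Fin N → Fin 2) → ℂ)
    (ht : cpRankLE t r) : Mdet N t = 0 := by
  obtain ⟨w, rfl⟩ := ht
  set A : Matrix ({v : Fin 2 × Fin N // v.1 ≠ 0} → Fin 2) (Fin r) ℂ :=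
    Matrix.of fun b j => ∏ v : {v : Fin 2 × Fin N // v.1 ≠ 0}, w j v.1 (b v) with hA
  set B : Matrix (Fin r) ({v : Fin 2 × Fin N // v.1 ≠ 0} → Fin 2) ℂ :=
    Matrix.of fun j b' => ∏ v : {v : Fin 2 × Fin N // ¬ v.1 ≠ 0}, w j v.1 (b' ⟨(1, v.1.2), by simp⟩)
    with hB
  have hM : Mmat N (fun x => ∑ j : Fin r, ∏ v : Fin 2 × Fin N, w j v (x v)) = A * B := by
    funext b b'
    show (∑ j : Fin r, ∏ v : Fin 2 × Fin N,
        w j v (if h : v.1 ≠ 0 then b ⟨v, h⟩ else b' ⟨(1, v.2), by simp⟩)) = (A * B) b b'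
    rw [Matrix.mul_apply]
    refine Finset.sum_congr rfl fun j _ => ?_
    rw [← Fintype.prod_subtype_mul_prod_subtype (fun v : Fin 2 × Fin N => v.1 ≠ 0)
      (fun v => w j v (if h : v.1 ≠ 0 then b ⟨v, h⟩ else b' ⟨(1, v.2), by simp⟩))]
    congr 1
    · exact Finset.prod_congr rfl fun v _ => by rw [dif_pos v.2]
    · exact Finset.prod_congr rfl fun v _ => by rw [dif_neg v.2]
  by_contra h0
  have hunit : IsUnit (Mmat N (fun x => ∑ j : Fin r, ∏ v : Fin 2 × Fin N, w j v (x v))) :=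
    (Matrix.isUnit_iff_isUnit_det _).mpr (isUnit_iff_ne_zero.mpr h0)
  have hrank := Matrix.rank_of_isUnit _ hunit
  have hle : (Mmat N (fun x => ∑ j : Fin r, ∏ v : Fin 2 × Fin N, w j v (x v))).rank ≤ r := by
    rw [hM]
    exact le_trans (Matrix.rank_mul_le_right A B) (le_trans (Matrix.rank_le_card_height B) (by simp))
  have hcard : Fintype.card ({v : Fin 2 × Fin N // v.1 ≠ 0} → Fin 2) = 2 ^ N := by
    rw [Fintype.card_fun, card_sub, Fintype.card_fin]
  have hfin : (2:ℕ) ^ N ≤ r := by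
    calc (2:ℕ) ^ N = _ := (hcard.symm.trans hrank.symm)
      _ ≤ r := hle
  exact absurd hfin (Nat.not_le.mpr hr)

lemma Mmat_T9 (N : ℕ) : Mmat N (T9 N) = 1 := by
  funext b b'
  show T9 N (fun v => if h : v.1 ≠ 0 then b ⟨v, h⟩ else b' ⟨(1, v.2), by simp⟩)
      = (1 : Matrix _ _ ℂ) b b'
  rw [T9_eq, Matrix.one_apply]
  have hfac : ∀ c : Fin N,
      ((if (if h : ((0 : Fin 2), c).1 ≠ 0 then b ⟨(0, c), h⟩ else b' ⟨(1, c), by simp⟩)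
          = (if h : ((1 : Fin 2), c).1 ≠ 0 then b ⟨(1, c), h⟩ else b' ⟨(1, c), by simp⟩)
        then (1:ℂ) else 0))
      = if b' ⟨(1, c), by simp⟩ = b ⟨(1, c), by simp⟩ then (1:ℂ) else 0 := by
    intro c
    rw [dif_neg (by simp), dif_pos (by simp)]
  rw [Finset.prod_congr rfl fun c _ => hfac c]
  by_cases h : b = b'
  · subst h
    simp
  · rw [if_neg h]
    obtain ⟨⟨⟨r, c0⟩, hr⟩, hv⟩ := Function.ne_iff.mp h
    obtain rfl : r = 1 := Fin.eq_one_of_ne_zero _ hr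
    refine Finset.prod_eq_zero (Finset.mem_univ c0) ?_
    rw [if_neg]
    intro heq
    exact hv heq.symm

/-- There is a tuple of tensors `(T_v)_v ∈ (ℂ² ⊗ (ℂ²)^{⊗4})^{2N}` whose torus contraction
`ψ((T_v)_v) ∈ (ℂ²)^{⊗2N}` equals
`Σ_{i : Fin N → Fin 2} e_{i(1)} ⊗ e_{i(1)} ⊗ ⋯ ⊗ e_{i(N)} ⊗ e_{i(N)}`, and this tensor has
border rank exactly `2^N`: it lies in the closure (Euclidean topology) of the set of tensors of
rank at most `2^N` but, for every `r < 2^N`, not in the closure of the set of tensors of rank at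
most `r`.  In particular a tensor of border rank `2^N` arises as a `2 × N` torus tensor network
contraction with bond dimension `2` and physical dimension `2`. -/
theorem stmt9 (N : ℕ) (hN : 2 ≤ N) (hNeven : Even N) :
    (∃ T : Fin 2 × Fin N → (Fin 2 → Fin 2 → Fin 2 → Fin 2 → Fin 2 → ℂ),
        psi N hN T = T9 N) ∧
      T9 N ∈ closure {t : (Fin 2 × Fin N → Fin 2) → ℂ | cpRankLE t (2 ^ N)} ∧
      ∀ r : ℕ, r < 2 ^ N →
        T9 N ∉ closure {t : (Fin 2 × Fin N → Fin 2) → ℂ | cpRankLE t r} := by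
  refine ⟨⟨fun _ => T0, ?_⟩, ?_, ?_⟩
  · funext b
    rw [psi_T0 N hN b, ← T9_eq]
  · exact subset_closure (T9_cpRank N)
  · intro r hr hmem
    have hclosed : IsClosed {t : (Fin 2 × Fin N → Fin 2) → ℂ | Mdet N t = 0} :=
      isClosed_eq (Mdet_continuous N) continuous_const
    have hsub : {t : (Fin 2 × Fin N → Fin 2) → ℂ | cpRankLE t r}
        ⊆ {t : (Fin 2 × Fin N → Fin 2) → ℂ | Mdet N t = 0} :=
      fun t ht => Mdet_zero N r hr t ht
    have hzero : Mdet N (T9 N) = 0 := closure_minimal hsub hclosed hmem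
    rw [Mdet, Mmat_T9, Matrix.det_one] at hzero
    exact one_ne_zero hzero
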